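/- Let x > 0 be a real number, and let A ⊆ ℤ² be a finite set such that every connected component of the subgraph of the integer lattice graph induced by A has at most x vertices. Then e(A, Aᶜ) ≥ 4·|A|/√x. -/

import Mathlib

open Filter Topology

noncomputable section

/-- Adjacency in the integer lattice graph: Euclidean distance exactly `1`. -/
def latticeAdj (p q : ℤ × ℤ) : Prop :=
  Real.sqrt (((p.1 - q.1 : ℤ) : ℝ)^2 + ((p.2 - q.2 : ℤ) : ℝ)^2) = 1

lemma latticeAdj_symm {p q : ℤ × ℤ} (h : latticeAdj p q) : latticeAdj q p := by
  unfold latticeAdj at h ⊢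
  have : (((q.1 - p.1 : ℤ) : ℝ)^2 + ((q.2 - p.2 : ℤ) : ℝ)^2)
      = (((p.1 - q.1 : ℤ) : ℝ)^2 + ((p.2 - q.2 : ℤ) : ℝ)^2) := by push_cast; ring
  rw [this]; exact h

lemma latticeAdj_irrefl (p : ℤ × ℤ) : ¬ latticeAdj p p := by
  unfold latticeAdj
  simp

/-- The integer lattice graph `ℤ²`. -/
def latticeGraph : SimpleGraph (ℤ × ℤ) where
  Adj p q := latticeAdj p q
  symm := ⟨fun _ _ h => latticeAdj_symm h⟩
  loopless := ⟨latticeAdj_irrefl⟩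

/-- `e(A, Aᶜ)`: the number of lattice edges with one endpoint in `A` and the other
outside `A` (counted as ordered pairs whose first coordinate lies in `A`, which counts
each such edge exactly once). -/
def eBnd (A : Set (ℤ × ℤ)) : ℕ :=
  Set.ncard {e : (ℤ × ℤ) × (ℤ × ℤ) | e.1 ∈ A ∧ e.2 ∉ A ∧ latticeAdj e.1 e.2}


lemma latticeAdj_iff {p q : ℤ × ℤ} :
    latticeAdj p q ↔ (p.1 - q.1)^2 + (p.2 - q.2)^2 = 1 := by
  unfold latticeAdj
  rw [show (((p.1 - q.1 : ℤ) : ℝ)^2 + ((p.2 - q.2 : ℤ) : ℝ)^2)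
      = (((p.1 - q.1)^2 + (p.2 - q.2)^2 : ℤ) : ℝ) by push_cast; ring]
  rw [Real.sqrt_eq_one]
  exact_mod_cast Iff.rfl

lemma latticeAdj_cases {p q : ℤ × ℤ} (h : latticeAdj p q) :
    (q.1 = p.1 + 1 ∧ q.2 = p.2) ∨ (q.1 = p.1 - 1 ∧ q.2 = p.2) ∨
    (q.1 = p.1 ∧ q.2 = p.2 + 1) ∨ (q.1 = p.1 ∧ q.2 = p.2 - 1) := by
  rw [latticeAdj_iff] at h
  rename' h => heq
  have h1 : (p.1 - q.1)^2 ≤ 1 := by nlinarith [sq_nonneg (p.2 - q.2), heq]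
  have h2 : (p.2 - q.2)^2 ≤ 1 := by nlinarith [sq_nonneg (p.1 - q.1), heq]
  have h1' : -1 ≤ p.1 - q.1 ∧ p.1 - q.1 ≤ 1 := abs_le_of_sq_le_sq' h1 one_pos.le
  have h2' : -1 ≤ p.2 - q.2 ∧ p.2 - q.2 ≤ 1 := abs_le_of_sq_le_sq' h2 one_pos.le
  obtain ⟨h1a, h1b⟩ := h1'
  obtain ⟨h2a, h2b⟩ := h2'
  have := sq_nonneg (p.1 - q.1)
  have := sq_nonneg (p.2 - q.2)
  rcases (by omega : p.1 - q.1 = -1 ∨ p.1 - q.1 = 0 ∨ p.1 - q.1 = 1) with h|h|h <;>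
  rcases (by omega : p.2 - q.2 = -1 ∨ p.2 - q.2 = 0 ∨ p.2 - q.2 = 1) with g|g|g <;>
  all_goals (rw [h, g] at heq; first | omega | norm_num at heq)


lemma adj_E (a b : ℤ) : latticeAdj (a, b) (a + 1, b) := by
  rw [latticeAdj_iff]; ring_nf
lemma adj_W (a b : ℤ) : latticeAdj (a, b) (a - 1, b) := by
  rw [latticeAdj_iff]; ring_nf
lemma adj_N (a b : ℤ) : latticeAdj (a, b) (a, b + 1) := by
  rw [latticeAdj_iff]; ring_nf
lemma adj_S (a b : ℤ) : latticeAdj (a, b) (a, b - 1) := by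
  rw [latticeAdj_iff]; ring_nf

/-- The boundary edge set. -/
def bsetE (B : Set (ℤ × ℤ)) : Set ((ℤ × ℤ) × (ℤ × ℤ)) :=
  {e | e.1 ∈ B ∧ e.2 ∉ B ∧ latticeAdj e.1 e.2}

lemma bsetE_finite {B : Set (ℤ × ℤ)} (hB : B.Finite) : (bsetE B).Finite := by
  have : bsetE B ⊆ (fun pd : (ℤ × ℤ) × (ℤ × ℤ) => (pd.1, (pd.1.1 + pd.2.1, pd.1.2 + pd.2.2))) ''
      (B ×ˢ ({(1,0), (-1,0), (0,1), (0,-1)} : Set (ℤ × ℤ))) := by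
    rintro ⟨⟨p1, p2⟩, q1, q2⟩ ⟨hp, _, hadj⟩
    rcases latticeAdj_cases hadj with ⟨h1, h2⟩ | ⟨h1, h2⟩ | ⟨h1, h2⟩ | ⟨h1, h2⟩
    · exact ⟨((p1, p2), (1, 0)), ⟨hp, by simp⟩, by simp_all [Prod.ext_iff]⟩
    · exact ⟨((p1, p2), (-1, 0)), ⟨hp, by simp⟩, by simp_all [Prod.ext_iff]; omega⟩
    · exact ⟨((p1, p2), (0, 1)), ⟨hp, by simp⟩, by simp_all [Prod.ext_iff]⟩
    · exact ⟨((p1, p2), (0, -1)), ⟨hp, by simp⟩, by simp_all [Prod.ext_iff]; omega⟩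
  exact Set.Finite.subset ((hB.prod (Set.toFinite _)).image _) this


/-- Core isoperimetric inequality. -/
lemma core_isop {B : Set (ℤ × ℤ)} (hB : B.Finite) :
    4 * Real.sqrt (B.ncard) ≤ ((bsetE B).ncard : ℝ) := by
  classical
  set s : Finset (ℤ × ℤ) := hB.toFinset with hs
  have hmem : ∀ p : ℤ × ℤ, p ∈ s ↔ p ∈ B := fun p => hB.mem_toFinset
  rcases s.eq_empty_or_nonempty with hse | hne
  · have : B = ∅ := by
      ext p; simp [← hmem p, hse]
    simp [this]
  set Bf : Finset ((ℤ × ℤ) × (ℤ × ℤ)) := (bsetE_finite hB).toFinset with hBf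
  have hmemB : ∀ e, e ∈ Bf ↔ e ∈ bsetE B := fun e => (bsetE_finite hB).mem_toFinset
  set R : Finset ℤ := s.image Prod.snd with hR
  set K : Finset ℤ := s.image Prod.fst with hK
  -- four disjoint families of boundary edges
  set F1 : Finset ((ℤ × ℤ) × (ℤ × ℤ)) := Bf.filter (fun e => e.2 = (e.1.1 + 1, e.1.2)) with hF1
  set F2 : Finset ((ℤ × ℤ) × (ℤ × ℤ)) := Bf.filter (fun e => e.2 = (e.1.1 - 1, e.1.2)) with hF2
  set F3 : Finset ((ℤ × ℤ) × (ℤ × ℤ)) := Bf.filter (fun e => e.2 = (e.1.1, e.1.2 + 1)) with hF3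
  set F4 : Finset ((ℤ × ℤ) × (ℤ × ℤ)) := Bf.filter (fun e => e.2 = (e.1.1, e.1.2 - 1)) with hF4
  -- each row gives an edge in F1 (rightmost) and F2 (leftmost)
  have hrow1 : Set.SurjOn (fun e : (ℤ × ℤ) × (ℤ × ℤ) => e.1.2) (F1 : Set _) (R : Set _) := by
    intro y hy
    simp only [Finset.coe_image, Set.mem_image, Finset.mem_coe, hR] at hy
    obtain ⟨p, hp, hpy⟩ := hy
    set row : Finset ℤ := (s.filter (fun q => q.2 = y)).image Prod.fst with hrow
    have hner : row.Nonempty := ⟨p.1, by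
      simp only [hrow, Finset.mem_image]; exact ⟨p, Finset.mem_filter.2 ⟨hp, hpy⟩, rfl⟩⟩
    set m : ℤ := row.max' hner with hm
    have hmrow : m ∈ row := row.max'_mem hner
    simp only [hrow, Finset.mem_image, Finset.mem_filter] at hmrow
    obtain ⟨q, ⟨hq, hqy⟩, hqm⟩ := hmrow
    have hqeq : q = (m, y) := Prod.ext hqm hqy
    have h1 : (m, y) ∈ B := (hmem _).1 (hqeq ▸ hq)
    have h2 : (m + 1, y) ∉ B := by
      intro hc
      have : m + 1 ∈ row := by
        simp only [hrow, Finset.mem_image, Finset.mem_filter]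
        exact ⟨(m + 1, y), ⟨(hmem _).2 hc, rfl⟩, rfl⟩
      have := row.le_max' _ this
      omega
    refine ⟨((m, y), (m + 1, y)), ?_, rfl⟩
    simp only [hF1, Finset.coe_filter, Set.mem_setOf_eq, hmemB]
    exact ⟨⟨h1, h2, adj_E m y⟩, trivial⟩
  have hrow2 : Set.SurjOn (fun e : (ℤ × ℤ) × (ℤ × ℤ) => e.1.2) (F2 : Set _) (R : Set _) := by
    intro y hy
    simp only [Finset.coe_image, Set.mem_image, Finset.mem_coe, hR] at hy
    obtain ⟨p, hp, hpy⟩ := hy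
    set row : Finset ℤ := (s.filter (fun q => q.2 = y)).image Prod.fst with hrow
    have hner : row.Nonempty := ⟨p.1, by
      simp only [hrow, Finset.mem_image]; exact ⟨p, Finset.mem_filter.2 ⟨hp, hpy⟩, rfl⟩⟩
    set m : ℤ := row.min' hner with hm
    have hmrow : m ∈ row := row.min'_mem hner
    simp only [hrow, Finset.mem_image, Finset.mem_filter] at hmrow
    obtain ⟨q, ⟨hq, hqy⟩, hqm⟩ := hmrow
    have hqeq : q = (m, y) := Prod.ext hqm hqy
    have h1 : (m, y) ∈ B := (hmem _).1 (hqeq ▸ hq)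
    have h2 : (m - 1, y) ∉ B := by
      intro hc
      have : m - 1 ∈ row := by
        simp only [hrow, Finset.mem_image, Finset.mem_filter]
        exact ⟨(m - 1, y), ⟨(hmem _).2 hc, rfl⟩, rfl⟩
      have := row.min'_le _ this
      omega
    refine ⟨((m, y), (m - 1, y)), ?_, rfl⟩
    simp only [hF2, Finset.coe_filter, Set.mem_setOf_eq, hmemB]
    exact ⟨⟨h1, h2, adj_W m y⟩, trivial⟩
  have hcol1 : Set.SurjOn (fun e : (ℤ × ℤ) × (ℤ × ℤ) => e.1.1) (F3 : Set _) (K : Set _) := by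
    intro x hxK
    simp only [Finset.coe_image, Set.mem_image, Finset.mem_coe, hK] at hxK
    obtain ⟨p, hp, hpx⟩ := hxK
    set col : Finset ℤ := (s.filter (fun q => q.1 = x)).image Prod.snd with hcol
    have hnec : col.Nonempty := ⟨p.2, by
      simp only [hcol, Finset.mem_image]; exact ⟨p, Finset.mem_filter.2 ⟨hp, hpx⟩, rfl⟩⟩
    set m : ℤ := col.max' hnec with hm
    have hmcol : m ∈ col := col.max'_mem hnec
    simp only [hcol, Finset.mem_image, Finset.mem_filter] at hmcol
    obtain ⟨q, ⟨hq, hqx⟩, hqm⟩ := hmcol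
    have hqeq : q = (x, m) := Prod.ext hqx hqm
    have h1 : (x, m) ∈ B := (hmem _).1 (hqeq ▸ hq)
    have h2 : (x, m + 1) ∉ B := by
      intro hc
      have : m + 1 ∈ col := by
        simp only [hcol, Finset.mem_image, Finset.mem_filter]
        exact ⟨(x, m + 1), ⟨(hmem _).2 hc, rfl⟩, rfl⟩
      have := col.le_max' _ this
      omega
    refine ⟨((x, m), (x, m + 1)), ?_, rfl⟩
    simp only [hF3, Finset.coe_filter, Set.mem_setOf_eq, hmemB]
    exact ⟨⟨h1, h2, adj_N x m⟩, trivial⟩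
  have hcol2 : Set.SurjOn (fun e : (ℤ × ℤ) × (ℤ × ℤ) => e.1.1) (F4 : Set _) (K : Set _) := by
    intro x hxK
    simp only [Finset.coe_image, Set.mem_image, Finset.mem_coe, hK] at hxK
    obtain ⟨p, hp, hpx⟩ := hxK
    set col : Finset ℤ := (s.filter (fun q => q.1 = x)).image Prod.snd with hcol
    have hnec : col.Nonempty := ⟨p.2, by
      simp only [hcol, Finset.mem_image]; exact ⟨p, Finset.mem_filter.2 ⟨hp, hpx⟩, rfl⟩⟩
    set m : ℤ := col.min' hnec with hm
    have hmcol : m ∈ col := col.min'_mem hnec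
    simp only [hcol, Finset.mem_image, Finset.mem_filter] at hmcol
    obtain ⟨q, ⟨hq, hqx⟩, hqm⟩ := hmcol
    have hqeq : q = (x, m) := Prod.ext hqx hqm
    have h1 : (x, m) ∈ B := (hmem _).1 (hqeq ▸ hq)
    have h2 : (x, m - 1) ∉ B := by
      intro hc
      have : m - 1 ∈ col := by
        simp only [hcol, Finset.mem_image, Finset.mem_filter]
        exact ⟨(x, m - 1), ⟨(hmem _).2 hc, rfl⟩, rfl⟩
      have := col.min'_le _ this
      omega
    refine ⟨((x, m), (x, m - 1)), ?_, rfl⟩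
    simp only [hF4, Finset.coe_filter, Set.mem_setOf_eq, hmemB]
    exact ⟨⟨h1, h2, adj_S x m⟩, trivial⟩
  have c1 : R.card ≤ F1.card := Finset.card_le_card_of_surjOn _ hrow1
  have c2 : R.card ≤ F2.card := Finset.card_le_card_of_surjOn _ hrow2
  have c3 : K.card ≤ F3.card := Finset.card_le_card_of_surjOn _ hcol1
  have c4 : K.card ≤ F4.card := Finset.card_le_card_of_surjOn _ hcol2
  -- disjointness
  have d12 : Disjoint F1 F2 := by
    rw [Finset.disjoint_left]
    intro e h1 h2
    simp only [hF1, hF2, Finset.mem_filter] at h1 h2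
    have := h1.2; have := h2.2
    have : (e.1.1 + 1, e.1.2) = ((e.1.1 - 1 : ℤ), e.1.2) := by rw [← h1.2, h2.2]
    simp [Prod.ext_iff] at this; omega
  have d34 : Disjoint F3 F4 := by
    rw [Finset.disjoint_left]
    intro e h1 h2
    simp only [hF3, hF4, Finset.mem_filter] at h1 h2
    have : (e.1.1, e.1.2 + 1) = (e.1.1, (e.1.2 - 1 : ℤ)) := by rw [← h1.2, h2.2]
    simp [Prod.ext_iff] at this; omega
  have d12_34 : Disjoint (F1 ∪ F2) (F3 ∪ F4) := by
    rw [Finset.disjoint_left]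
    intro e h1 h2
    simp only [Finset.mem_union, hF1, hF2, hF3, hF4, Finset.mem_filter] at h1 h2
    rcases h1 with h1 | h1 <;> rcases h2 with h2 | h2 <;>
      have e1 := h1.2 <;> have e2 := h2.2 <;> rw [e2] at e1 <;>
      simp only [Prod.ext_iff] at e1 <;> omega
  have hsub : F1 ∪ F2 ∪ (F3 ∪ F4) ⊆ Bf := by
    intro e he
    simp only [Finset.mem_union, hF1, hF2, hF3, hF4, Finset.mem_filter] at he
    rcases he with (h | h) | (h | h) <;> exact h.1
  have hcards : 2 * R.card + 2 * K.card ≤ Bf.card := by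
    calc 2 * R.card + 2 * K.card ≤ F1.card + F2.card + (F3.card + F4.card) := by omega
    _ = (F1 ∪ F2 ∪ (F3 ∪ F4)).card := by
        rw [Finset.card_union_of_disjoint d12_34, Finset.card_union_of_disjoint d12,
          Finset.card_union_of_disjoint d34]
    _ ≤ Bf.card := Finset.card_le_card hsub
  -- |B| ≤ |K| * |R|
  have hprod : s.card ≤ K.card * R.card := by
    have : s ⊆ K ×ˢ R := by
      intro p hp
      simp only [Finset.mem_product, hK, hR, Finset.mem_image]
      exact ⟨⟨p, hp, rfl⟩, ⟨p, hp, rfl⟩⟩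
    calc s.card ≤ (K ×ˢ R).card := Finset.card_le_card this
    _ = K.card * R.card := Finset.card_product K R
  -- real arithmetic
  have hBn : (B.ncard : ℝ) = (s.card : ℝ) := by
    rw [Set.ncard_eq_toFinset_card B hB]
  have hbn : ((bsetE B).ncard : ℝ) = (Bf.card : ℝ) := by
    rw [Set.ncard_eq_toFinset_card (bsetE B) (bsetE_finite hB)]
  rw [hBn, hbn]
  have hKR : Real.sqrt (s.card) ≤ Real.sqrt ((K.card : ℝ) * R.card) := by
    apply Real.sqrt_le_sqrt
    exact_mod_cast hprod
  have amgm : Real.sqrt ((K.card : ℝ) * R.card) ≤ ((K.card : ℝ) + R.card) / 2 := by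
    nlinarith [sq_nonneg (Real.sqrt K.card - Real.sqrt R.card),
      Real.sq_sqrt (Nat.cast_nonneg K.card : (0:ℝ) ≤ K.card),
      Real.sq_sqrt (Nat.cast_nonneg R.card : (0:ℝ) ≤ R.card),
      Real.sqrt_mul_self (Nat.cast_nonneg K.card : (0:ℝ) ≤ K.card),
      Real.sqrt_nonneg (K.card : ℝ), Real.sqrt_nonneg (R.card : ℝ),
      Real.sqrt_mul (Nat.cast_nonneg K.card : (0:ℝ) ≤ K.card) (R.card : ℝ)]
  have hfin : ((2 * R.card + 2 * K.card : ℕ) : ℝ) ≤ (Bf.card : ℝ) := by exact_mod_cast hcards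
  push_cast at hfin
  nlinarith [hKR, amgm, hfin]


/-- Restriction of the lattice graph to `A`, as a graph on the ambient type. -/
def GA (A : Set (ℤ × ℤ)) : SimpleGraph (ℤ × ℤ) where
  Adj p q := p ∈ A ∧ q ∈ A ∧ latticeAdj p q
  symm := ⟨fun p q ⟨hp, hq, h⟩ => ⟨hq, hp, latticeAdj_symm h⟩⟩
  loopless := ⟨fun p ⟨_, _, h⟩ => latticeAdj_irrefl p h⟩

def comp (A : Set (ℤ × ℤ)) (a : ℤ × ℤ) : Set (ℤ × ℤ) := {p | (GA A).Reachable a p}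

lemma mem_A_of_walk {A : Set (ℤ × ℤ)} {u v : ℤ × ℤ} (w : (GA A).Walk u v)
    (hu : u ∈ A) : v ∈ A := by
  induction w with
  | nil => exact hu
  | cons h _ ih => exact ih h.2.1

lemma comp_subset {A : Set (ℤ × ℤ)} {a : ℤ × ℤ} (ha : a ∈ A) : comp A a ⊆ A := by
  intro p hp
  obtain ⟨w⟩ := hp
  exact mem_A_of_walk w ha

lemma mem_comp_self (A : Set (ℤ × ℤ)) (a : ℤ × ℤ) : a ∈ comp A a := Set.mem_setOf.2 ⟨.nil⟩

lemma comp_closed {A : Set (ℤ × ℤ)} {a p q : ℤ × ℤ} (ha : a ∈ A)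
    (hp : p ∈ comp A a) (hq : q ∈ A) (hadj : latticeAdj p q) : q ∈ comp A a := by
  have hpA : p ∈ A := comp_subset ha hp
  exact (hp : (GA A).Reachable a p).trans (SimpleGraph.Adj.reachable ⟨hpA, hq, hadj⟩)

/-- A walk in `GA A` starting in a set `B ⊆ A` closed under `A`-adjacency
stays in `B` and is a walk in `GA B`. -/
lemma reach_restrict {A B : Set (ℤ × ℤ)}
    (hcl : ∀ p ∈ B, ∀ q ∈ A, latticeAdj p q → q ∈ B) {u v : ℤ × ℤ}
    (w : (GA A).Walk u v) (hu : u ∈ B) : v ∈ B ∧ (GA B).Reachable u v := by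
  induction w with
  | nil => exact ⟨hu, .refl _⟩
  | @cons p r v h w ih =>
      have hr : r ∈ B := hcl p hu r h.2.1 h.2.2
      obtain ⟨hv, hrv⟩ := ih hr
      have hadj : (GA B).Adj p r := ⟨hu, hr, h.2.2⟩
      exact ⟨hv, hadj.reachable.trans hrv⟩

lemma reach_mono {A B : Set (ℤ × ℤ)} (hBA : B ⊆ A) {u v : ℤ × ℤ}
    (h : (GA B).Reachable u v) : (GA A).Reachable u v := by
  apply SimpleGraph.Reachable.mono (fun p q hpq => ?_) h
  exact ⟨hBA hpq.1, hBA hpq.2.1, hpq.2.2⟩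

lemma walk_to_induce {A : Set (ℤ × ℤ)} {u v : ℤ × ℤ} (w : (GA A).Walk u v) :
    ∀ (hu : u ∈ A) (hv : v ∈ A),
      (SimpleGraph.induce A latticeGraph).Reachable ⟨u, hu⟩ ⟨v, hv⟩ := by
  induction w with
  | nil => intro h1 h2; exact SimpleGraph.Reachable.refl _
  | @cons p r v h w ih =>
      intro hp hv
      have hr : r ∈ A := h.2.1
      have step : (SimpleGraph.induce A latticeGraph).Adj ⟨p, hp⟩ ⟨r, hr⟩ := h.2.2
      exact step.reachable.trans (ih hr hv)

/-- Bridge between reachability in the induced subgraph and in `GA A`. -/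
lemma induce_reach_iff {A : Set (ℤ × ℤ)} (a b : A) :
    (SimpleGraph.induce A latticeGraph).Reachable a b ↔ (GA A).Reachable a.val b.val := by
  constructor
  · intro h
    refine SimpleGraph.Reachable.map ⟨Subtype.val, ?_⟩ h
    intro p q hpq
    exact ⟨p.2, q.2, hpq⟩
  · intro h
    obtain ⟨w⟩ := h
    exact walk_to_induce w a.2 b.2


lemma main_ind (x : ℝ) (hx : 0 < x) :
    ∀ n : ℕ, ∀ A : Set (ℤ × ℤ), A.Finite → A.ncard = n →
    (∀ a ∈ A, ((comp A a).ncard : ℝ) ≤ x) →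
    4 * (A.ncard : ℝ) / Real.sqrt x ≤ ((bsetE A).ncard : ℝ) := by
  intro n
  induction n using Nat.strong_induction_on with
  | _ n IH =>
  intro A hA hn hcmp
  rcases Set.eq_empty_or_nonempty A with rfl | ⟨a, ha⟩
  · have : bsetE (∅ : Set (ℤ × ℤ)) = ∅ := by
      ext e; simp [bsetE]
    simp [this]
  set C := comp A a with hC
  have hCA : C ⊆ A := comp_subset ha
  have hCfin : C.Finite := hA.subset hCA
  have haC : a ∈ C := mem_comp_self A a
  have hCx : ((C.ncard : ℝ)) ≤ x := hcmp a ha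
  set A' := A \ C with hA'
  have hA'fin : A'.Finite := hA.subset Set.diff_subset
  have hCcl : ∀ p ∈ C, ∀ q ∈ A, latticeAdj p q → q ∈ C :=
    fun p hp q hq hadj => comp_closed ha hp hq hadj
  have hA'cl : ∀ p ∈ A', ∀ q ∈ A, latticeAdj p q → q ∈ A' := by
    intro p hp q hq hadj
    refine ⟨hq, fun hqC => hp.2 ?_⟩
    exact hCcl q hqC p hp.1 (latticeAdj_symm hadj)
  have hdecomp : bsetE A = bsetE C ∪ bsetE A' := by
    ext e
    constructor
    · rintro ⟨h1, h2, h3⟩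
      by_cases hc : e.1 ∈ C
      · exact Or.inl ⟨hc, fun hq => h2 (hCA hq), h3⟩
      · exact Or.inr ⟨⟨h1, hc⟩, fun hq => h2 hq.1, h3⟩
    · rintro (⟨h1, h2, h3⟩ | ⟨h1, h2, h3⟩)
      · exact ⟨hCA h1, fun hq => h2 (hCcl e.1 h1 e.2 hq h3), h3⟩
      · exact ⟨h1.1, fun hq => h2 (hA'cl e.1 h1 e.2 hq h3), h3⟩
  have hdisj : Disjoint (bsetE C) (bsetE A') := by
    rw [Set.disjoint_left]
    rintro e ⟨h1, _, _⟩ ⟨h1', _, _⟩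
    exact h1'.2 h1
  have hcardsum : (bsetE A).ncard = (bsetE C).ncard + (bsetE A').ncard := by
    rw [hdecomp, Set.ncard_union_eq hdisj (bsetE_finite hCfin) (bsetE_finite hA'fin)]
  have hCpos : 0 < C.ncard := (Set.ncard_pos hCfin).2 ⟨a, haC⟩
  have hCle : C.ncard ≤ A.ncard := Set.ncard_le_ncard hCA hA
  have hA'card : A'.ncard = A.ncard - C.ncard := Set.ncard_diff hCA hCfin
  have hless : A'.ncard < n := by omega
  have hcomp' : ∀ a' ∈ A', ((comp A' a').ncard : ℝ) ≤ x := by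
    intro a' ha'
    have heq : comp A' a' = comp A a' := by
      ext p
      constructor
      · exact fun h => reach_mono Set.diff_subset h
      · intro h
        obtain ⟨w⟩ := (h : (GA A).Reachable a' p)
        exact (reach_restrict hA'cl w ha').2
    rw [heq]
    exact hcmp a' ha'.1
  have IH' := IH A'.ncard hless A' hA'fin rfl hcomp'
  have hcore := core_isop hCfin
  have hsx : 0 < Real.sqrt x := Real.sqrt_pos.2 hx
  have h1 : 4 * (C.ncard : ℝ) / Real.sqrt x ≤ 4 * Real.sqrt (C.ncard) := by
    rw [div_le_iff₀ hsx]
    have h2 : Real.sqrt (C.ncard) * Real.sqrt (C.ncard) = (C.ncard : ℝ) :=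
      Real.mul_self_sqrt (by positivity)
    have h3 : Real.sqrt (C.ncard) ≤ Real.sqrt x := Real.sqrt_le_sqrt hCx
    nlinarith [Real.sqrt_nonneg (C.ncard : ℝ)]
  have hsum : (A.ncard : ℝ) = (C.ncard : ℝ) + (A'.ncard : ℝ) := by
    rw [hA'card]
    push_cast [Nat.cast_sub hCle]
    ring
  rw [hcardsum]
  push_cast
  rw [hsum]
  have : 4 * ((C.ncard : ℝ) + (A'.ncard : ℝ)) / Real.sqrt x
      = 4 * (C.ncard : ℝ) / Real.sqrt x + 4 * (A'.ncard : ℝ) / Real.sqrt x := by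
    field_simp
  rw [this]
  linarith [h1, hcore, IH']

/-- If every connected component of the subgraph of the integer lattice
induced by a finite set `A ⊆ ℤ²` has at most `x` vertices, then `e(A, Aᶜ) ≥ 4·|A|/√x`. -/
theorem lattice_isoperimetric_small_components (x : ℝ) (hx : 0 < x)
    (A : Set (ℤ × ℤ)) (hA : A.Finite)
    (hcomp : ∀ a : A,
      (Nat.card {b : A // (SimpleGraph.induce A latticeGraph).Reachable a b} : ℝ) ≤ x) :
    4 * (A.ncard : ℝ) / Real.sqrt x ≤ (eBnd A : ℝ) := by
  have hcmp : ∀ a ∈ A, ((comp A a).ncard : ℝ) ≤ x := by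
    intro a ha
    have key : comp A a = Subtype.val ''
        {b : A | (SimpleGraph.induce A latticeGraph).Reachable ⟨a, ha⟩ b} := by
      ext p
      constructor
      · intro hp
        have hpA : p ∈ A := comp_subset ha hp
        exact ⟨⟨p, hpA⟩, (induce_reach_iff ⟨a, ha⟩ ⟨p, hpA⟩).2 hp, rfl⟩
      · rintro ⟨b, hb, rfl⟩
        exact (induce_reach_iff ⟨a, ha⟩ b).1 hb
    have hcards : (comp A a).ncard
        = Nat.card {b : A // (SimpleGraph.induce A latticeGraph).Reachable ⟨a, ha⟩ b} := by
      rw [key, Set.ncard_image_of_injective _ Subtype.val_injective,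
        ← Nat.card_coe_set_eq]
      rfl
    rw [hcards]
    exact hcomp ⟨a, ha⟩
  have : ((bsetE A).ncard : ℝ) = (eBnd A : ℝ) := rfl
  rw [← this]
  exact main_ind x hx A.ncard A hA rfl hcmp

end
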